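/- Let F : ℝ^d → ℝ have L-Lipschitz gradient, be convex on the sublevel set B₀ = {x : F(x) ≤ r₀} (with F(x*) = 0 at the unique minimizer x*), with B₀ ⊆ {‖x - x*‖ ≤ r_u}. Suppose h ≤ min{1/(2L), r_u²/r₀} and X_n ∈ B₀. Then the gradient descent iterates X_{n+k} (defined by X_{j+1} = X_j - h∇F(X_j)) remain in B₀ and satisfy F(X_{n+k}) ≤ 1/(1/r₀ + k h / r_u²) for all k ≥ 0. -/

import Mathlib

open Real InnerProductSpace intervalIntegral

set_option maxHeartbeats 1600000

local notation "⟪" x ", " y "⟫" => @inner ℝ _ _ x y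

private theorem descent_lemma {d : ℕ} (F : EuclideanSpace ℝ (Fin d) → ℝ) (L : ℝ) (hL : 0 < L)
    (hdiff : Differentiable ℝ F)
    (hLip : ∀ x y, ‖gradient F x - gradient F y‖ ≤ L * ‖x - y‖)
    (x y : EuclideanSpace ℝ (Fin d)) :
    F y ≤ F x + ⟪gradient F x, y - x⟫ + L / 2 * ‖y - x‖ ^ 2 := by
  set v := y - x with hv
  have hderiv : ∀ u : ℝ, HasDerivAt (fun s : ℝ => F (x + s • v))
      ⟪gradient F (x + u • v), v⟫ u := by
    intro u
    have h1 : HasDerivAt (fun s : ℝ => x + s • v) v u := by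
      simpa using ((hasDerivAt_id u).smul_const v).const_add x
    have h2 := (hdiff (x + u • v)).hasGradientAt.hasFDerivAt
    simpa [InnerProductSpace.toDual_apply_apply, Function.comp_def] using h2.comp_hasDerivAt u h1
  have hgradcont : Continuous fun u : ℝ => gradient F (x + u • v) := by
    have hlip : LipschitzWith (Real.toNNReal L) (gradient F) := by
      apply LipschitzWith.of_dist_le_mul
      intro a b
      simpa [dist_eq_norm, Real.coe_toNNReal L hL.le] using hLip a b
    exact hlip.continuous.comp (by continuity)
  have hcont : Continuous fun u : ℝ => ⟪gradient F (x + u • v), v⟫ :=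
    hgradcont.inner continuous_const
  have hFTC : F (x + (1:ℝ) • v) - F (x + (0:ℝ) • v)
      = ∫ u in (0:ℝ)..1, ⟪gradient F (x + u • v), v⟫ :=
    (integral_eq_sub_of_hasDerivAt (fun u _ => hderiv u)
      (hcont.intervalIntegrable 0 1)).symm
  have hbound : (∫ u in (0:ℝ)..1, ⟪gradient F (x + u • v), v⟫)
      ≤ ∫ u in (0:ℝ)..1, (⟪gradient F x, v⟫ + L * u * ‖v‖ ^ 2) := by
    apply integral_mono_on (by norm_num) (hcont.intervalIntegrable 0 1)
      ((by continuity : Continuous fun u : ℝ => ⟪gradient F x, v⟫ + L * u * ‖v‖^2).intervalIntegrable 0 1)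
    intro u hu
    have hb : ⟪gradient F (x + u • v) - gradient F x, v⟫ ≤ L * u * ‖v‖ ^ 2 := by
      calc ⟪gradient F (x + u • v) - gradient F x, v⟫
          ≤ ‖gradient F (x + u • v) - gradient F x‖ * ‖v‖ := real_inner_le_norm _ _
        _ ≤ (L * ‖(x + u • v) - x‖) * ‖v‖ := by gcongr; exact hLip _ _
        _ = L * u * ‖v‖ ^ 2 := by
            simp [norm_smul, abs_of_nonneg hu.1, sq]
            ring
    have expand : ⟪gradient F (x + u • v), v⟫
        = ⟪gradient F x, v⟫ + ⟪gradient F (x + u • v) - gradient F x, v⟫ := by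
      rw [inner_sub_left]; ring
    linarith [hb, expand.le, expand.ge]
  have hint : (∫ u in (0:ℝ)..1, (⟪gradient F x, v⟫ + L * u * ‖v‖ ^ 2))
      = ⟪gradient F x, v⟫ + L / 2 * ‖v‖ ^ 2 := by
    have hInt2 : IntervalIntegrable (fun u : ℝ => L * u * ‖v‖ ^ 2) MeasureTheory.volume 0 1 :=
      Continuous.intervalIntegrable (by fun_prop) 0 1
    rw [integral_add (intervalIntegrable_const) hInt2]
    simp only [integral_const, smul_eq_mul]
    have : (∫ u in (0:ℝ)..1, L * u * ‖v‖ ^ 2) = L * ‖v‖^2 * ∫ u in (0:ℝ)..1, u := by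
      rw [← intervalIntegral.integral_const_mul]
      congr 1; ext u; ring
    rw [this, integral_id]; ring
  have h0 : x + (0:ℝ) • v = x := by simp
  have h1 : x + (1:ℝ) • v = y := by simp [hv]
  rw [h0, h1] at hFTC
  linarith [hFTC, hbound, hint.le, hint.ge]

private theorem convex_grad {d : ℕ} {F : EuclideanSpace ℝ (Fin d) → ℝ}
    {s : Set (EuclideanSpace ℝ (Fin d))}
    (hconv : ConvexOn ℝ s F) (hdiff : Differentiable ℝ F)
    {x y : EuclideanSpace ℝ (Fin d)} (hx : x ∈ s) (hy : y ∈ s) :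
    F x + ⟪gradient F x, y - x⟫ ≤ F y := by
  set v := y - x with hv
  have hderiv : HasDerivAt (fun u : ℝ => F (x + u • v)) ⟪gradient F x, v⟫ 0 := by
    have h1 : HasDerivAt (fun u : ℝ => x + u • v) v 0 := by
      simpa using ((hasDerivAt_id (0:ℝ)).smul_const v).const_add x
    have h2 := (hdiff (x + (0:ℝ) • v)).hasGradientAt.hasFDerivAt
    have h3 := h2.comp_hasDerivAt 0 h1
    simpa [InnerProductSpace.toDual_apply_apply, Function.comp_def] using h3
  have hslope : Filter.Tendsto (slope (fun u : ℝ => F (x + u • v)) 0) (nhdsWithin 0 (Set.Ioi 0))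
      (nhds ⟪gradient F x, v⟫) :=
    (hasDerivAt_iff_tendsto_slope.mp hderiv).mono_left
      (nhdsWithin_mono 0 (fun u hu => ne_of_gt hu))
  have hbound : ∀ᶠ u in nhdsWithin (0:ℝ) (Set.Ioi 0),
      slope (fun u : ℝ => F (x + u • v)) 0 u ≤ F y - F x := by
    filter_upwards [Ioc_mem_nhdsGT (zero_lt_one)] with u hu
    have hu0 : 0 < u := hu.1
    have hcvx := hconv.2 hx hy (by linarith [hu.2] : (0:ℝ) ≤ 1 - u) hu0.le (by ring)
    have hpt : (1 - u) • x + u • y = x + u • v := by rw [hv]; module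
    rw [hpt] at hcvx
    simp only [smul_eq_mul] at hcvx
    rw [slope_def_field]
    have h0 : x + (0:ℝ) • v = x := by simp
    rw [h0, sub_zero, div_le_iff₀ hu0]
    nlinarith [hcvx]
  have := le_of_tendsto hslope hbound
  linarith [this]

private theorem core_norm (u β τ : ℝ) (hu : 0 ≤ u) (huβ : u ≤ β) (hβ : β ≤ 1/4) (hτ : 0 ≤ τ)
    (hC : τ^2*(1+u) ≤ 1) : u ≤ (1 - τ + β*τ^2)*(1+u) := by
  nlinarith [sq_nonneg (τ*(2*u+1) - 1), mul_nonneg hu (sq_nonneg (τ*(2*u+1)-1)),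
    mul_nonneg (sub_nonneg.2 huβ) (mul_nonneg (sq_nonneg τ) (by linarith : (0:ℝ) ≤ 1+u)),
    mul_nonneg hu (sub_nonneg.2 hC), mul_nonneg hu hu, sq_nonneg τ, sq_nonneg (1-τ)]

private theorem core' (L ru h f t' : ℝ) (hL : 0 < L) (hru : 0 < ru) (hh : 0 < h)
    (hh1 : 2*h*L ≤ 1) (hf : 0 < f) (hfmax : f ≤ L*ru^2/2) (ht' : 0 ≤ t')
    (hC : t'^2*(ru^2+h*f) ≤ f^2) :
    h*f^2 ≤ (f - t'*ru + t'^2/(2*L))*(ru^2+h*f) := by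
  have hru2 : (0:ℝ) < ru^2 := by positivity
  set u := h*f/ru^2 with hu_def
  set β := f/(2*L*ru^2) with hβ_def
  set τ := t'*ru/f with hτ_def
  have hu : 0 ≤ u := by positivity
  have huβ : u ≤ β := by
    rw [hu_def, hβ_def, div_le_div_iff₀ (by positivity) (by positivity)]
    nlinarith [mul_nonneg (mul_nonneg hf.le hru2.le) (sub_nonneg.2 hh1)]
  have hβ4 : β ≤ 1/4 := by
    rw [hβ_def, div_le_iff₀ (by positivity)]
    nlinarith
  have hτ0 : 0 ≤ τ := by positivity
  have hCn : τ^2*(1+u) ≤ 1 := by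
    have e : τ^2*(1+u) = (t'^2*(ru^2+h*f)) / f^2 := by
      rw [hτ_def, hu_def]; field_simp
    rw [e, div_le_one (by positivity)]; exact hC
  have hcore := core_norm u β τ hu huβ hβ4 hτ0 hCn
  have key : (1 - τ + β*τ^2)*(1+u) * (f * ru^2) = (f - t'*ru + t'^2/(2*L))*(ru^2+h*f) := by
    rw [hτ_def, hu_def, hβ_def]
    field_simp
  have hm : u * (f*ru^2) ≤ (1 - τ + β*τ^2)*(1+u) * (f*ru^2) :=
    mul_le_mul_of_nonneg_right hcore (by positivity)
  rw [key] at hm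
  calc h*f^2 = u * (f*ru^2) := by rw [hu_def]; field_simp
    _ ≤ _ := hm

private lemma norm_smul_sq {d : ℕ} (c : ℝ) (v : EuclideanSpace ℝ (Fin d)) :
    ‖c • v‖^2 = c^2 * ‖v‖^2 := by
  rw [norm_smul, Real.norm_eq_abs, mul_pow, sq_abs]

private theorem gd_step {d : ℕ} (F : EuclideanSpace ℝ (Fin d) → ℝ) (L r₀ ru h : ℝ)
    (xstar : EuclideanSpace ℝ (Fin d))
    (hL : 0 < L) (hr₀ : 0 < r₀) (hru : 0 < ru)
    (hh : 0 < h) (hh1 : h ≤ 1 / (2 * L))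
    (hdiff : Differentiable ℝ F)
    (hLip : ∀ x y, ‖gradient F x - gradient F y‖ ≤ L * ‖x - y‖)
    (hmin : ∀ x, F xstar ≤ F x) (hFstar : F xstar = 0)
    (hconv : ConvexOn ℝ {x : EuclideanSpace ℝ (Fin d) | F x ≤ r₀} F)
    (hB₀ : {x : EuclideanSpace ℝ (Fin d) | F x ≤ r₀} ⊆ Metric.closedBall xstar ru)
    (Xk : EuclideanSpace ℝ (Fin d)) (hXk : F Xk ≤ r₀) :
    F (Xk - h • gradient F Xk) ≤ F Xk ∧
    F (Xk - h • gradient F Xk) * (ru^2 + h * F Xk) ≤ F Xk * ru^2 := by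
  have hF0 : ∀ z, 0 ≤ F z := fun z => hFstar ▸ hmin z
  have hLh : 2 * h * L ≤ 1 := by
    rw [le_div_iff₀ (by positivity)] at hh1; linarith
  have hgstar : gradient F xstar = 0 := by
    have hlm : IsLocalMin F xstar := Filter.Eventually.of_forall hmin
    rw [gradient, hlm.fderiv_eq_zero, map_zero]
  have D : ∀ (p v : EuclideanSpace ℝ (Fin d)),
      F (p + v) ≤ F p + ⟪gradient F p, v⟫ + L / 2 * ‖v‖ ^ 2 := by
    intro p v
    simpa using descent_lemma F L hL hdiff hLip p (p + v)
  have C : ∀ {x y : EuclideanSpace ℝ (Fin d)}, F x ≤ r₀ → F y ≤ r₀ →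
      F x + ⟪gradient F x, y - x⟫ ≤ F y := fun hx hy => convex_grad hconv hdiff hx hy
  have hball : ∀ {x : EuclideanSpace ℝ (Fin d)}, F x ≤ r₀ → ‖x - xstar‖ ≤ ru := by
    intro x hx
    have := hB₀ hx
    rwa [Metric.mem_closedBall, dist_eq_norm] at this
  set g := gradient F Xk with hgdef
  set X' := Xk - h • g with hX'def
  set g' := gradient F X' with hg'def
  set δ := g - g' with hδdef
  set t := ‖g‖ with ht
  set t' := ‖g'‖ with ht'
  set dd := ‖δ‖ with hdd
  set xx := ⟪g, δ⟫ with hxx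
  set f := F Xk with hf
  set f' := F X' with hf'
  set w := Xk - xstar with hwdef
  set w' := X' - xstar with hw'def
  have hginv : g - δ = g' := by rw [hδdef]; abel
  have hδg : ⟪δ, g⟫ = xx := by rw [hxx]; exact real_inner_comm g δ
  have hδδ : ⟪δ, δ⟫ = dd^2 := by rw [hdd]; exact real_inner_self_eq_norm_sq δ
  have hgg : ⟪g, g⟫ = t^2 := by rw [ht]; exact real_inner_self_eq_norm_sq g
  have hfpos0 : 0 ≤ f := hF0 Xk
  have hf'pos0 : 0 ≤ f' := hF0 X'
  -- P3 : t^2 ≤ 2 L f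
  have P3 : t^2 ≤ 2*L*f := by
    have h1 := D Xk (-((1/L) • g))
    rw [inner_neg_right, real_inner_smul_right, real_inner_self_eq_norm_sq,
      norm_neg, norm_smul_sq] at h1
    have h0 := hF0 (Xk + -((1/L) • g))
    have hq : f - (1/L)*t^2 + L/2*((1/L)^2*t^2) = f - t^2/(2*L) := by field_simp; ring
    have h2 : 0 ≤ f - t^2/(2*L) := by rw [← hq]; nlinarith [h1, h0]
    have h3 := (div_le_iff₀ (by positivity : (0:ℝ) < 2*L)).mp (by linarith : t^2/(2*L) ≤ f)
    linarith
  -- P4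
  have P4 : f' ≤ f - h * t^2 + L/2 * (h^2 * t^2) := by
    have h1 := D Xk (-(h • g))
    rw [inner_neg_right, real_inner_smul_right, real_inner_self_eq_norm_sq,
      norm_neg, norm_smul_sq] at h1
    have e : Xk + -(h•g) = X' := by rw [hX'def]; abel
    rw [e] at h1
    linarith [h1]
  have hmono : f' ≤ f := by
    nlinarith [P4, mul_nonneg (mul_nonneg hh.le hh.le) (sq_nonneg t),
      mul_nonneg hh.le (sq_nonneg t)]
  have hX'B : f' ≤ r₀ := le_trans hmono hXk
  have P3' : t'^2 ≤ 2*L*f' := by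
    have h1 := D X' (-((1/L) • g'))
    rw [inner_neg_right, real_inner_smul_right, real_inner_self_eq_norm_sq,
      norm_neg, norm_smul_sq] at h1
    have h0 := hF0 (X' + -((1/L) • g'))
    have hq : f' - (1/L)*t'^2 + L/2*((1/L)^2*t'^2) = f' - t'^2/(2*L) := by field_simp; ring
    have h2 : 0 ≤ f' - t'^2/(2*L) := by rw [← hq]; nlinarith [h1, h0]
    have h3 := (div_le_iff₀ (by positivity : (0:ℝ) < 2*L)).mp (by linarith : t'^2/(2*L) ≤ f')
    linarith
  -- Lipschitz bound
  have hdLip : dd ≤ L*(h*t) := by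
    have hl := hLip Xk X'
    have e : Xk - X' = h • g := by rw [hX'def]; abel
    rw [← hgdef, ← hg'def, ← hδdef, ← hdd, e, norm_smul, Real.norm_eq_abs,
      abs_of_pos hh, ← ht] at hl
    exact hl
  have hxxle : xx ≤ t*dd := real_inner_le_norm g δ
  have hxx2 : xx ≤ L*h*t^2 := by nlinarith [norm_nonneg g, norm_nonneg δ, hdLip, hxxle]
  have hdd0 : (0:ℝ) ≤ dd := norm_nonneg δ
  have hdd2 : dd^2 ≤ L^2*h^2*t^2 := by nlinarith [hdLip, hdd0]
  -- point z
  set z := X' + (1/L) • δ with hzdef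
  have hzXk : z = Xk + ((1/L) • δ - h • g) := by rw [hzdef, hX'def]; abel
  have hzval : F z ≤ f + ((1/L)*xx - h*t^2)
      + L/2*((1/L)^2*dd^2 - 2*((1/L)*(h*xx)) + h^2*t^2) := by
    have h1 := D Xk ((1/L) • δ - h • g)
    rw [← hzXk] at h1
    have e1 : ⟪g, (1/L) • δ - h • g⟫ = (1/L)*xx - h*t^2 := by
      rw [inner_sub_right, real_inner_smul_right, real_inner_smul_right,
        real_inner_self_eq_norm_sq]
    have e2 : ‖(1/L) • δ - h • g‖^2 = (1/L)^2*dd^2 - 2*((1/L)*(h*xx)) + h^2*t^2 := by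
      rw [norm_sub_sq_real, norm_smul_sq, norm_smul_sq, real_inner_smul_left,
        real_inner_smul_right, hδg]
    rw [e1, e2] at h1
    exact h1
  have hzB : F z ≤ r₀ := by
    have hE : ((1/L)*xx - h*t^2) + L/2*((1/L)^2*dd^2 - 2*((1/L)*(h*xx)) + h^2*t^2)
        = (2*xx*(1-L*h) + dd^2 - 2*L*h*t^2 + L^2*h^2*t^2)/(2*L) := by
      field_simp; ring
    have hnum : 2*xx*(1-L*h) + dd^2 - 2*L*h*t^2 + L^2*h^2*t^2 ≤ 0 := by
      nlinarith [mul_nonneg (sub_nonneg.2 hxx2) (by linarith : (0:ℝ) ≤ 1 - L*h), hdd2]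
    have : ((1/L)*xx - h*t^2) + L/2*((1/L)^2*dd^2 - 2*((1/L)*(h*xx)) + h^2*t^2) ≤ 0 := by
      rw [hE]
      exact div_nonpos_of_nonpos_of_nonneg hnum (by positivity)
    linarith [hzval, hXk, this]
  -- P8
  have P8 : f - f' ≤ h*t^2 - dd^2/(2*L) := by
    have ha1 := C hXk hzB
    rw [← hgdef, ← hf] at ha1
    have e0 : z - Xk = (1/L) • δ - h • g := by rw [hzXk]; abel
    rw [e0] at ha1
    have e1 : ⟪g, (1/L) • δ - h • g⟫ = (1/L)*xx - h*t^2 := by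
      rw [inner_sub_right, real_inner_smul_right, real_inner_smul_right,
        real_inner_self_eq_norm_sq]
    rw [e1] at ha1
    have hb1 := D X' ((1/L) • δ)
    rw [← hzdef, ← hg'def, real_inner_smul_right, norm_smul_sq, ← hf', ← hdd] at hb1
    have e2 : ⟪g', δ⟫ = xx - dd^2 := by
      rw [← hginv, inner_sub_left, ← hxx, hδδ]
    rw [e2] at hb1
    have hq1 : f' + (1/L)*(xx - dd^2) + L/2*((1/L)^2*dd^2)
        = f' + (1/L)*xx - dd^2/(2*L) := by field_simp; ring
    have hq2 : h*t^2 - dd^2/(2*L) = h*t^2 - dd^2/(2*L) := rfl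
    linarith [ha1, hb1, hq1.le, hq1.ge]
  -- P7
  have P7 : f' + h*(t^2 - xx) ≤ f := by
    have hc1 := C hX'B hXk
    rw [← hg'def, ← hf, ← hf'] at hc1
    have e : Xk - X' = h • g := by rw [hX'def]; abel
    rw [e, real_inner_smul_right] at hc1
    have e2 : ⟪g', g⟫ = t^2 - xx := by
      rw [← hginv, inner_sub_left, hδg, hgg]
    rw [e2] at hc1
    exact hc1
  -- P10 and consequences
  have P10 : dd^2 ≤ 2*L*(h*xx) := by
    have h1 : dd^2/(2*L) ≤ h*xx := by linarith [P7, P8]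
    exact (div_le_iff₀ (by positivity : (0:ℝ) < 2*L)).mp h1 |>.trans_eq (by ring)
  have ht'sq : t'^2 = t^2 - 2*xx + dd^2 := by
    rw [ht', ← hginv, norm_sub_sq_real, ← ht, ← hdd, hxx]
  -- P6 : f ≤ ⟪g,w⟫ - t²/2L ; then f ≤ L ru²/2
  have hz₀val : F (xstar + (1/L) • g) ≤ t^2/(2*L) := by
    have h1 := D xstar ((1/L) • g)
    rw [hgstar, inner_zero_left, hFstar, norm_smul_sq] at h1
    have hq : 0 + 0 + L/2*((1/L)^2*t^2) = t^2/(2*L) := by field_simp; ring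
    linarith [h1, hq.le, hq.ge]
  have ht2f : t^2/(2*L) ≤ f := by
    rw [div_le_iff₀ (by positivity : (0:ℝ) < 2*L)]; linarith [P3]
  have hz₀B : F (xstar + (1/L) • g) ≤ r₀ := le_trans hz₀val (le_trans ht2f hXk)
  have P6 : f ≤ ⟪g, w⟫ - t^2/(2*L) := by
    have hc1 := C hXk hz₀B
    rw [← hgdef, ← hf] at hc1
    have e : xstar + (1/L) • g - Xk = (1/L) • g - w := by rw [hwdef]; abel
    rw [e, inner_sub_right, real_inner_smul_right, real_inner_self_eq_norm_sq, ← ht] at hc1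
    have hq : (1/L)*t^2 - t^2/(2*L) = t^2/(2*L) := by field_simp; ring
    linarith [hc1, hz₀val, hq.le, hq.ge]
  have hnw : ‖w‖ ≤ ru := hball hXk
  have hfmax : f ≤ L*ru^2/2 := by
    have ha : ⟪g, w⟫ ≤ t*ru := by
      calc ⟪g, w⟫ ≤ ‖g‖ * ‖w‖ := real_inner_le_norm g w
        _ ≤ t * ru := by rw [← ht]; exact mul_le_mul_of_nonneg_left hnw (norm_nonneg g)
    have hq : t*ru - t^2/(2*L) - L*ru^2/2 = -((t - L*ru)^2/(2*L)) := by field_simp; ring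
    have hq2 : t*ru - t^2/(2*L) - L*ru^2/2 ≤ 0 := by
      rw [hq]
      have : (0:ℝ) ≤ (t - L*ru)^2/(2*L) := by positivity
      linarith
    linarith [P6, ha]
  -- P6' : f' ≤ t' ru - t'²/2L
  have hz₀'val : F (xstar + (1/L) • g') ≤ t'^2/(2*L) := by
    have h1 := D xstar ((1/L) • g')
    rw [hgstar, inner_zero_left, hFstar, norm_smul_sq] at h1
    have hq : 0 + 0 + L/2*((1/L)^2*t'^2) = t'^2/(2*L) := by field_simp; ring
    linarith [h1, hq.le, hq.ge]
  have ht2f' : t'^2/(2*L) ≤ f' := by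
    rw [div_le_iff₀ (by positivity : (0:ℝ) < 2*L)]; linarith [P3']
  have hz₀'B : F (xstar + (1/L) • g') ≤ r₀ := le_trans hz₀'val (le_trans ht2f' hX'B)
  have P6' : f' ≤ ⟪g', w'⟫ - t'^2/(2*L) := by
    have hc1 := C hX'B hz₀'B
    rw [← hg'def, ← hf'] at hc1
    have e : xstar + (1/L) • g' - X' = (1/L) • g' - w' := by rw [hw'def]; abel
    rw [e, inner_sub_right, real_inner_smul_right, real_inner_self_eq_norm_sq, ← ht'] at hc1
    have hq : (1/L)*t'^2 - t'^2/(2*L) = t'^2/(2*L) := by field_simp; ring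
    linarith [hc1, hz₀'val, hq.le, hq.ge]
  have hnw' : ‖w'‖ ≤ ru := hball hX'B
  have hf'ub : f' ≤ t'*ru - t'^2/(2*L) := by
    have ha' : ⟪g', w'⟫ ≤ t'*ru := by
      calc ⟪g', w'⟫ ≤ ‖g'‖ * ‖w'‖ := real_inner_le_norm g' w'
        _ ≤ t' * ru := by rw [← ht']; exact mul_le_mul_of_nonneg_left hnw' (norm_nonneg g')
    linarith [P6', ha']
  -- scalar-only phase
  have ht'0 : 0 ≤ t' := norm_nonneg g'
  clear_value g X' g' δ t t' dd xx f f' w w' z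
  have hxx0 : 0 ≤ xx := by
    by_contra hc
    push_neg at hc
    have hpp : 0 < L*h*(-xx) := mul_pos (mul_pos hL hh) (by linarith)
    linarith only [P10, sq_nonneg dd, hpp]
  have hkey : t'^2 ≤ t^2 - xx := by
    linarith only [ht'sq.le, ht'sq.ge, P10,
      mul_nonneg hxx0 (by linarith only [hLh] : (0:ℝ) ≤ 1 - 2*h*L)]
  -- final assembly
  refine ⟨hmono, ?_⟩
  rcases eq_or_lt_of_le hfpos0 with hf0 | hfpos
  · -- f = 0
    have hf'0 : f' = 0 := le_antisymm (by linarith only [hmono, hf0.ge]) hf'pos0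
    rw [hf'0, ← hf0]
    simp
  · have hpos : (0:ℝ) < ru^2 + h*f := by positivity
    by_cases hcase : f^2 ≤ (t^2 - xx)*(ru^2 + h*f)
    · -- case A : via P7
      have h1 : h*f^2 ≤ h*((t^2 - xx)*(ru^2 + h*f)) :=
        mul_le_mul_of_nonneg_left hcase hh.le
      have h2 : h*(t^2-xx)*(ru^2+h*f) ≤ (f - f')*(ru^2+h*f) :=
        mul_le_mul_of_nonneg_right (by linarith only [P7] : h*(t^2-xx) ≤ f - f') hpos.le
      linarith only [h1, h2]
    · -- case B : via core'
      push_neg at hcase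
      have hC2 : t'^2*(ru^2+h*f) ≤ f^2 := by
        have hm := mul_le_mul_of_nonneg_right hkey hpos.le
        linarith only [hm, hcase.le]
      have hcore := core' L ru h f t' hL hru hh hLh hfpos hfmax ht'0 hC2
      have hΔ : f - t'*ru + t'^2/(2*L) ≤ f - f' := by linarith only [hf'ub]
      have h2 : (f - t'*ru + t'^2/(2*L))*(ru^2+h*f) ≤ (f - f')*(ru^2+h*f) :=
        mul_le_mul_of_nonneg_right hΔ hpos.le
      linarith only [hcore, h2]

theorem stmt9 (d : ℕ) (F : EuclideanSpace ℝ (Fin d) → ℝ) (L r₀ ru h : ℝ)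
    (xstar : EuclideanSpace ℝ (Fin d)) (X : ℕ → EuclideanSpace ℝ (Fin d))
    (hL : 0 < L) (hr₀ : 0 < r₀) (hru : 0 < ru)
    (hh : 0 < h) (hh1 : h ≤ 1 / (2 * L)) (hh2 : h ≤ ru ^ 2 / r₀)
    (hdiff : Differentiable ℝ F)
    (hLip : ∀ x y, ‖gradient F x - gradient F y‖ ≤ L * ‖x - y‖)
    (hmin : ∀ x, F xstar ≤ F x) (hFstar : F xstar = 0)
    (hconv : ConvexOn ℝ {x : EuclideanSpace ℝ (Fin d) | F x ≤ r₀} F)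
    (hB₀ : {x : EuclideanSpace ℝ (Fin d) | F x ≤ r₀} ⊆ Metric.closedBall xstar ru)
    (hX0 : F (X 0) ≤ r₀)
    (hiter : ∀ k : ℕ, X (k + 1) = X k - h • gradient F (X k)) :
    ∀ k : ℕ, F (X k) ≤ r₀ ∧ F (X k) ≤ 1 / (1 / r₀ + k * h / ru ^ 2) := by
  have hF0 : ∀ z, 0 ≤ F z := fun z => hFstar ▸ hmin z
  have hru2 : (0:ℝ) < ru^2 := by positivity
  intro k
  induction k with
  | zero =>
    refine ⟨hX0, ?_⟩
    simpa using hX0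
  | succ k ih =>
    obtain ⟨ihB, ihm⟩ := ih
    have hstep := gd_step F L r₀ ru h xstar hL hr₀ hru hh hh1 hdiff hLip hmin hFstar
      hconv hB₀ (X k) ihB
    rw [← hiter k] at hstep
    obtain ⟨hmono, hrec⟩ := hstep
    have hBk1 : F (X (k+1)) ≤ r₀ := le_trans hmono ihB
    refine ⟨hBk1, ?_⟩
    -- harmonic recursion
    set a : ℝ := 1/r₀ + k*h/ru^2 with ha_def
    have ha_pos : 0 < a := by positivity
    have hmk : F (X k) * a ≤ 1 := by
      have : F (X k) ≤ 1/a := ihm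
      calc F (X k) * a ≤ (1/a) * a := mul_le_mul_of_nonneg_right this ha_pos.le
        _ = 1 := by field_simp
    have ha1 : (1:ℝ)/r₀ + (↑(k+1)) * h/ru^2 = a + h/ru^2 := by
      rw [ha_def]; push_cast; ring
    rw [ha1]
    have hapos2 : 0 < a + h/ru^2 := by positivity
    rw [le_div_iff₀ hapos2]
    -- goal : F (X (k+1)) * (a + h/ru²) ≤ 1
    have key : F (X (k+1)) * (a + h/ru^2) * (ru^2 + h * F (X k)) ≤ 1 * (ru^2 + h * F (X k)) := by
      have e1 : F (X (k+1)) * (a + h/ru^2) * (ru^2 + h * F (X k))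
          = (F (X (k+1)) * (ru^2 + h * F (X k))) * a
            + (F (X (k+1)) * (ru^2 + h * F (X k))) * (h/ru^2) := by ring
      have e2 : (F (X (k+1)) * (ru^2 + h * F (X k))) * a ≤ (F (X k) * ru^2) * a :=
        mul_le_mul_of_nonneg_right hrec ha_pos.le
      have e3 : (F (X (k+1)) * (ru^2 + h * F (X k))) * (h/ru^2) ≤ (F (X k) * ru^2) * (h/ru^2) :=
        mul_le_mul_of_nonneg_right hrec (by positivity)
      have e4 : (F (X k) * ru^2) * a ≤ ru^2 := by
        calc (F (X k) * ru^2) * a = (F (X k) * a) * ru^2 := by ring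
          _ ≤ 1 * ru^2 := mul_le_mul_of_nonneg_right hmk hru2.le
          _ = ru^2 := one_mul _
      have e5 : (F (X k) * ru^2) * (h/ru^2) = h * F (X k) := by field_simp
      rw [e1]
      calc (F (X (k+1)) * (ru^2 + h * F (X k))) * a
            + (F (X (k+1)) * (ru^2 + h * F (X k))) * (h/ru^2)
          ≤ (F (X k) * ru^2) * a + (F (X k) * ru^2) * (h/ru^2) := add_le_add e2 e3
        _ ≤ ru^2 + h * F (X k) := by rw [e5]; linarith [e4]
        _ = 1 * (ru^2 + h * F (X k)) := by ring
    have hpos3 : 0 < ru^2 + h * F (X k) := by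
      have := hF0 (X k); positivity
    exact le_of_mul_le_mul_right (by linarith [key]) hpos3
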